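/- Let {P_n} be the Perrin sequence. Suppose the base-10 digit expansion of P_n is the concatenation of two repdigit blocks, i.e., it consists of ℓ ≥ 1 copies of a digit d1 (the leading digit, so d1 ≥ 1) followed by m ≥ 1 copies of a digit d2 (equivalently, P_n = d1·((10^ℓ − 1)/9)·10^m + d2·((10^m − 1)/9), with 10^{ℓ+m−1} ≤ P_n), and suppose moreover that this digit string is a palindrome (it reads the same forwards and backwards). Then P_n = 22. -/

import Mathlib

/-- The Perrin sequence: P 0 = 3, P 1 = 0, P 2 = 2, P (n+3) = P (n+1) + P n. -/
def perrin : ℕ → ℕ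
  | 0 => 3
  | 1 => 0
  | 2 => 2
  | n + 3 => perrin (n + 1) + perrin n

namespace PerrinAux

/-- One step of the Perrin recurrence on triples, reduced mod 707000. -/
def pstep (s : ℕ × ℕ × ℕ) : ℕ × ℕ × ℕ := (s.2.1, s.2.2, (s.2.1 + s.1) % 707000)

/-- Iterates of `pstep`. -/
def stepN : ℕ → (ℕ × ℕ × ℕ) → (ℕ × ℕ × ℕ)
  | 0, s => s
  | n + 1, s => stepN n (pstep s)

/-- Forbidden residues `(d * 10^(j+3)) % 707000`, for `j < 12`. -/
def T : ℕ → List ℕ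
  | 1 => [1000, 10000, 100000, 293000, 102000, 313000, 302000, 192000, 506000, 111000, 403000, 495000]
  | 2 => [2000, 20000, 200000, 586000, 204000, 626000, 604000, 384000, 305000, 222000, 99000, 283000]
  | 3 => [3000, 30000, 300000, 172000, 306000, 232000, 199000, 576000, 104000, 333000, 502000, 71000]
  | 4 => [4000, 40000, 400000, 465000, 408000, 545000, 501000, 61000, 610000, 444000, 198000, 566000]
  | 5 => [5000, 50000, 500000, 51000, 510000, 151000, 96000, 253000, 409000, 555000, 601000, 354000]
  | 6 => [6000, 60000, 600000, 344000, 612000, 464000, 398000, 445000, 208000, 666000, 297000, 142000]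
  | 7 => [7000, 70000, 700000, 637000, 7000, 70000, 700000, 637000, 7000, 70000, 700000, 637000]
  | 8 => [8000, 80000, 93000, 223000, 109000, 383000, 295000, 122000, 513000, 181000, 396000, 425000]
  | 9 => [9000, 90000, 193000, 516000, 211000, 696000, 597000, 314000, 312000, 292000, 92000, 213000]
  | _ => []

def badd (a d : ℕ) : Bool :=
  (9 * a + d) % 707000 % 1000 == 0 && (T d).elem ((9 * a + d) % 707000)

def good (a : ℕ) : Bool :=
  !(badd a 1 || badd a 2 || badd a 3 || badd a 4 || badd a 5 ||
    badd a 6 || badd a 7 || badd a 8 || badd a 9)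

def chkN : ℕ → (ℕ × ℕ × ℕ) → Bool
  | 0, _ => true
  | n + 1, s => good s.1 && chkN n (pstep s)

lemma stepN_iter : ∀ n s, stepN n s = pstep^[n] s := by
  intro n
  induction n with
  | zero => intro s; rfl
  | succ n ih =>
    intro s
    show stepN n (pstep s) = _
    rw [ih (pstep s), ← Function.iterate_succ_apply]

lemma stepN_add (p q : ℕ) : ∀ s, stepN (p + q) s = stepN p (stepN q s) := by
  induction q with
  | zero => intro s; rfl
  | succ q ih =>
    intro s
    show stepN (p + q) (pstep s) = _
    rw [ih (pstep s)]
    rfl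

lemma chkN_add (p q : ℕ) : ∀ s, chkN (p + q) s = (chkN q s && chkN p (stepN q s)) := by
  induction q with
  | zero =>
    intro s
    show chkN p s = (true && chkN p s)
    rw [Bool.true_and]
  | succ q ih =>
    intro s
    show (good s.1 && chkN (p + q) (pstep s)) = _
    rw [ih (pstep s)]
    show _ = ((good s.1 && chkN q (pstep s)) && chkN p (stepN q (pstep s)))
    rw [Bool.and_assoc]

set_option maxRecDepth 1000000 in
lemma s0 : stepN 1000 (3, 0, 2) = (295125, 559439, 31918) := by decide
set_option maxRecDepth 1000000 in
lemma s1 : stepN 1000 (295125, 559439, 31918) = (295125, 43127, 444907) := by decide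
set_option maxRecDepth 1000000 in
lemma s2 : stepN 1000 (295125, 43127, 444907) = (694378, 164125, 542877) := by decide
set_option maxRecDepth 1000000 in
lemma s3 : stepN 1000 (694378, 164125, 542877) = (497125, 496314, 271793) := by decide
set_option maxRecDepth 1000000 in
lemma s4 : stepN 1000 (497125, 496314, 271793) = (156250, 346127, 583782) := by decide
set_option maxRecDepth 1000000 in
lemma s5 : stepN 1000 (156250, 346127, 583782) = (88378, 353500, 88377) := by decide
set_option maxRecDepth 1000000 in
lemma s6 : stepN 1000 (88378, 353500, 88377) = (471875, 471064, 385418) := by decide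
set_option maxRecDepth 1000000 in
lemma s7 : stepN 1000 (471875, 471064, 385418) = (295125, 43127, 179782) := by decide

set_option maxRecDepth 1000000 in
lemma c0 : chkN 1000 (3, 0, 2) = true := by decide
set_option maxRecDepth 1000000 in
lemma c1 : chkN 1000 (295125, 559439, 31918) = true := by decide
set_option maxRecDepth 1000000 in
lemma c2 : chkN 1000 (295125, 43127, 444907) = true := by decide
set_option maxRecDepth 1000000 in
lemma c3 : chkN 1000 (694378, 164125, 542877) = true := by decide
set_option maxRecDepth 1000000 in
lemma c4 : chkN 1000 (497125, 496314, 271793) = true := by decide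
set_option maxRecDepth 1000000 in
lemma c5 : chkN 1000 (156250, 346127, 583782) = true := by decide
set_option maxRecDepth 1000000 in
lemma c6 : chkN 1000 (88378, 353500, 88377) = true := by decide
set_option maxRecDepth 1000000 in
lemma c7 : chkN 1000 (471875, 471064, 385418) = true := by decide

set_option maxRecDepth 1000000 in
lemma s8 : stepN 400 (295125, 43127, 179782) = (3, 0, 2) := by decide

set_option maxRecDepth 1000000 in
lemma c8 : chkN 400 (295125, 43127, 179782) = true := by decide

lemma step_period : stepN 8400 (3, 0, 2) = (3, 0, 2) := by
  rw [show (8400:ℕ) = 7400 + 1000 from by norm_num, stepN_add, s0]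
  rw [show (7400:ℕ) = 6400 + 1000 from by norm_num, stepN_add, s1]
  rw [show (6400:ℕ) = 5400 + 1000 from by norm_num, stepN_add, s2]
  rw [show (5400:ℕ) = 4400 + 1000 from by norm_num, stepN_add, s3]
  rw [show (4400:ℕ) = 3400 + 1000 from by norm_num, stepN_add, s4]
  rw [show (3400:ℕ) = 2400 + 1000 from by norm_num, stepN_add, s5]
  rw [show (2400:ℕ) = 1400 + 1000 from by norm_num, stepN_add, s6]
  rw [show (1400:ℕ) = 400 + 1000 from by norm_num, stepN_add, s7]
  exact s8

lemma chk_8400 : chkN 8400 (3, 0, 2) = true := by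
  rw [show (8400:ℕ) = 7400 + 1000 from by norm_num, chkN_add, c0, s0, Bool.true_and]
  rw [show (7400:ℕ) = 6400 + 1000 from by norm_num, chkN_add, c1, s1, Bool.true_and]
  rw [show (6400:ℕ) = 5400 + 1000 from by norm_num, chkN_add, c2, s2, Bool.true_and]
  rw [show (5400:ℕ) = 4400 + 1000 from by norm_num, chkN_add, c3, s3, Bool.true_and]
  rw [show (4400:ℕ) = 3400 + 1000 from by norm_num, chkN_add, c4, s4, Bool.true_and]
  rw [show (3400:ℕ) = 2400 + 1000 from by norm_num, chkN_add, c5, s5, Bool.true_and]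
  rw [show (2400:ℕ) = 1400 + 1000 from by norm_num, chkN_add, c6, s6, Bool.true_and]
  rw [show (1400:ℕ) = 400 + 1000 from by norm_num, chkN_add, c7, s7, Bool.true_and]
  exact c8

lemma chk_spec : ∀ n s, chkN n s = true → ∀ m, m < n → good ((pstep^[m] s).1) = true := by
  intro n
  induction n with
  | zero => intro s _ m hm; omega
  | succ n ih =>
    intro s hs m hm
    have h : good s.1 = true ∧ chkN n (pstep s) = true := by
      simpa [chkN, Bool.and_eq_true] using hs
    match m with
    | 0 => exact h.1
    | m + 1 =>
      rw [Function.iterate_succ_apply]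
      exact ih (pstep s) h.2 m (by omega)

lemma pstep_iter_eq (n : ℕ) :
    pstep^[n] (3, 0, 2) =
      (perrin n % 707000, perrin (n+1) % 707000, perrin (n+2) % 707000) := by
  induction n with
  | zero => rfl
  | succ n ih =>
    rw [Function.iterate_succ_apply', ih]
    show (perrin (n+1) % 707000, perrin (n+2) % 707000,
        (perrin (n+1) % 707000 + perrin n % 707000) % 707000) =
      (perrin (n+1) % 707000, perrin (n+2) % 707000, perrin (n+3) % 707000)
    have h3 : perrin (n + 3) = perrin (n + 1) + perrin n := by rw [perrin]
    rw [h3]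
    conv_rhs => rw [Nat.add_mod]

lemma iter_add_period (n : ℕ) : pstep^[n + 8400] (3, 0, 2) = pstep^[n] (3, 0, 2) := by
  rw [Function.iterate_add_apply, ← stepN_iter 8400 (3,0,2), step_period]

lemma iter_mod (n : ℕ) : pstep^[n] (3, 0, 2) = pstep^[n % 8400] (3, 0, 2) := by
  have key : ∀ q r : ℕ, pstep^[r + 8400 * q] (3, 0, 2) = pstep^[r] (3, 0, 2) := by
    intro q
    induction q with
    | zero => intro r; rfl
    | succ q ih =>
      intro r
      have e : r + 8400 * (q + 1) = (r + 8400 * q) + 8400 := by ring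
      rw [e, iter_add_period, ih]
  conv_lhs => rw [← Nat.mod_add_div n 8400]
  exact key _ _

lemma good_perrin (n : ℕ) : good (perrin n % 707000) = true := by
  have h1 : perrin n % 707000 = (pstep^[n] (3, 0, 2)).1 := by rw [pstep_iter_eq]
  rw [h1, iter_mod]
  exact chk_spec 8400 (3, 0, 2) chk_8400 (n % 8400) (Nat.mod_lt _ (by norm_num))

set_option maxRecDepth 100000 in
set_option maxHeartbeats 1000000 in
lemma mem_T : ∀ d, 1 ≤ d → d < 10 → ∀ j, j < 12 → (d * 10 ^ (j + 3)) % 707000 ∈ T d := by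
  decide

set_option maxHeartbeats 1000000 in
lemma pow_cycle : ∀ s : ℕ, 10 ^ (s + 3) % 707000 = 10 ^ (s % 12 + 3) % 707000 := by
  intro s
  induction s using Nat.strong_induction_on with
  | _ s ih =>
    rcases lt_or_ge s 12 with h | h
    · rw [Nat.mod_eq_of_lt h]
    · obtain ⟨t, rfl⟩ : ∃ t, s = t + 12 := ⟨s - 12, by omega⟩
      have h1 : (10:ℕ) ^ (t + 12 + 3) % 707000 = 10 ^ (t + 3) % 707000 := by
        have e1 : t + 12 + 3 = t + 15 := by ring
        have e2 : (10:ℕ) ^ (t + 15) = 10 ^ t * 10 ^ 15 := by rw [pow_add]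
        have e3 : (10:ℕ) ^ (t + 3) = 10 ^ t * 10 ^ 3 := by rw [pow_add]
        rw [e1, e2, e3]
        exact Nat.ModEq.mul_left _ (by norm_num [Nat.ModEq])
      rw [h1, ih t (by omega)]
      congr 2
      omega

/-- The key modular exclusion: `9 * perrin n + d` is never `d * 10^k` for `k ≥ 3`, `1 ≤ d ≤ 9`. -/
lemma no_big_repdigit (n d k : ℕ) (hd : 1 ≤ d) (hd' : d ≤ 9) (hk : 3 ≤ k)
    (h : 9 * perrin n + d = d * 10 ^ k) : False := by
  have hg : good (perrin n % 707000) = true := good_perrin n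
  set a := perrin n % 707000 with ha
  set u := (9 * a + d) % 707000 with hu
  have hu1 : u = (9 * perrin n + d) % 707000 := by omega
  obtain ⟨j, rfl⟩ : ∃ j, k = j + 3 := ⟨k - 3, by omega⟩
  have hu2 : u = (d * 10 ^ (j % 12 + 3)) % 707000 := by
    rw [hu1, h, Nat.mul_mod, pow_cycle j, ← Nat.mul_mod]
  have humem : u ∈ T d := hu2 ▸ mem_T d hd (by omega) (j % 12) (Nat.mod_lt _ (by norm_num))
  have hu1000 : u % 1000 = 0 := by
    have e : (10:ℕ) ^ (j + 3) = 10 ^ j * 1000 := by rw [pow_add]; norm_num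
    have e2 : 9 * perrin n + d = 1000 * (d * 10 ^ j) := by rw [h, e]; ring
    omega
  have hbad : badd a d = true := by
    have e1 : (9 * a + d) % 707000 = u := hu.symm
    simp only [badd, e1, hu1000, beq_self_eq_true, Bool.true_and]
    exact List.elem_iff.mpr humem
  rw [good] at hg
  simp only [Bool.not_eq_true', Bool.or_eq_false_iff] at hg
  interval_cases d <;> simp_all

/-- Perrin numbers from index 17 on are at least 100. -/
lemma perrin_big : ∀ t, 100 ≤ perrin (t + 17) := by
  have key : ∀ t, 100 ≤ perrin (t + 17) ∧ 100 ≤ perrin (t + 18) ∧ 100 ≤ perrin (t + 19) := by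
    intro t
    induction t with
    | zero => refine ⟨?_, ?_, ?_⟩ <;> decide
    | succ t ih =>
      obtain ⟨h1, h2, h3⟩ := ih
      refine ⟨h2, h3, ?_⟩
      have e : perrin (t + 17 + 3) = perrin (t + 17 + 1) + perrin (t + 17) := by rw [perrin]
      have e2 : t + 1 + 19 = t + 17 + 3 := by omega
      have e3 : t + 17 + 1 = t + 18 := by omega
      rw [e2, e, e3]
      omega
  exact fun t => (key t).1

lemma perrin_table : perrin 0 = 3 ∧ perrin 1 = 0 ∧ perrin 2 = 2 ∧ perrin 3 = 3 ∧ perrin 4 = 2 ∧ perrin 5 = 5 ∧ perrin 6 = 5 ∧ perrin 7 = 7 ∧ perrin 8 = 10 ∧ perrin 9 = 12 ∧ perrin 10 = 17 ∧ perrin 11 = 22 ∧ perrin 12 = 29 ∧ perrin 13 = 39 ∧ perrin 14 = 51 ∧ perrin 15 = 68 ∧ perrin 16 = 90 := by decide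

/-- Leading digit of `N` equals `N / 10 ^ (log 10 N)`. -/
lemma digits_getLast_eq : ∀ N : ℕ, (h : N ≠ 0) →
    (Nat.digits 10 N).getLast (Nat.digits_ne_nil_iff_ne_zero.mpr h) =
      N / 10 ^ (Nat.log 10 N) := by
  intro N
  induction N using Nat.strong_induction_on with
  | _ N ih =>
    intro h
    rcases lt_or_ge N 10 with hN | hN
    · have h10 : N / 10 = 0 := Nat.div_eq_of_lt hN
      have hlog : Nat.log 10 N = 0 := Nat.log_eq_zero_iff.mpr (Or.inl hN)
      have hd : Nat.digits 10 N = [N] := by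
        rw [Nat.digits_def' (by norm_num : (1:ℕ) < 10) (Nat.pos_of_ne_zero h), h10,
          Nat.mod_eq_of_lt hN, Nat.digits_zero]
      simp [hd, hlog]
    · have h1 : N / 10 ≠ 0 := by omega
      rw [Nat.digits_getLast N (by norm_num) _ (Nat.digits_ne_nil_iff_ne_zero.mpr h1)]
      rw [ih (N / 10) (Nat.div_lt_self (by omega) (by norm_num)) h1]
      have hlog : Nat.log 10 (N / 10) = Nat.log 10 N - 1 := Nat.log_div_base 10 N
      have hpos : 1 ≤ Nat.log 10 N := Nat.log_pos (by norm_num) hN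
      rw [hlog, Nat.div_div_eq_div_mul]
      congr 1
      rw [← pow_succ']
      congr 1
      omega

end PerrinAux

/-- If the decimal expansion of the Perrin number `P n` consists of `ℓ ≥ 1` copies of a
digit `d1 ≥ 1` followed by `m ≥ 1` copies of a digit `d2` (expressed arithmetically as
`P n = d1·((10^ℓ − 1)/9)·10^m + d2·((10^m − 1)/9)` with `10^(ℓ+m−1) ≤ P n`), and moreover
the digit string of `P n` is a palindrome, then `P n = 22`. -/
theorem perrin_palindromic_concat_of_two_repdigits
    (n ℓ m d1 d2 : ℕ) (hℓ : 1 ≤ ℓ) (hm : 1 ≤ m)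
    (hd1 : 1 ≤ d1) (hd1' : d1 ≤ 9) (hd2 : d2 ≤ 9)
    (heq : perrin n = d1 * ((10 ^ ℓ - 1) / 9) * 10 ^ m + d2 * ((10 ^ m - 1) / 9))
    (hsize : 10 ^ (ℓ + m - 1) ≤ perrin n)
    (hpal : (Nat.digits 10 (perrin n)).reverse = Nat.digits 10 (perrin n)) :
    perrin n = 22 := by
  obtain ⟨N, hN⟩ : ∃ N, N = perrin n := ⟨perrin n, rfl⟩
  rw [← hN] at heq hsize hpal ⊢
  -- basic decompositions of powers of 10
  have pow9 : ∀ e : ℕ, 10 ^ e % 9 = 1 := by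
    intro e; rw [Nat.pow_mod]; norm_num
  obtain ⟨qa, hqa⟩ : ∃ q, 10 ^ ℓ = 9 * q + 1 :=
    ⟨10 ^ ℓ / 9, by have := Nat.div_add_mod (10 ^ ℓ) 9; have := pow9 ℓ; omega⟩
  obtain ⟨qb, hqb⟩ : ∃ q, 10 ^ m = 9 * q + 1 :=
    ⟨10 ^ m / 9, by have := Nat.div_add_mod (10 ^ m) 9; have := pow9 m; omega⟩
  have hrepa : (10 ^ ℓ - 1) / 9 = qa := by omega
  have hrepb : (10 ^ m - 1) / 9 = qb := by omega
  rw [hrepa, hrepb] at heq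
  obtain ⟨ℓ', rfl⟩ : ∃ ℓ', ℓ = ℓ' + 1 := ⟨ℓ - 1, by omega⟩
  obtain ⟨m', rfl⟩ : ∃ m', m = m' + 1 := ⟨m - 1, by omega⟩
  obtain ⟨qc, hqc⟩ : ∃ q, 10 ^ ℓ' = 9 * q + 1 :=
    ⟨10 ^ ℓ' / 9, by have := Nat.div_add_mod (10 ^ ℓ') 9; have := pow9 ℓ'; omega⟩
  obtain ⟨qd, hqd⟩ : ∃ q, 10 ^ m' = 9 * q + 1 :=
    ⟨10 ^ m' / 9, by have := Nat.div_add_mod (10 ^ m') 9; have := pow9 m'; omega⟩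
  have hA : (10:ℕ) ^ (ℓ' + 1) = 10 * 10 ^ ℓ' := by rw [pow_succ]; ring
  have hB : (10:ℕ) ^ (m' + 1) = 10 * 10 ^ m' := by rw [pow_succ]; ring
  have hqa' : qa = 10 * qc + 1 := by omega
  have hqb' : qb = 10 * qd + 1 := by omega
  have hpowv : (10:ℕ) ^ (ℓ' + 1 + (m' + 1) - 1) = 10 ^ ℓ' * 10 ^ (m' + 1) := by
    rw [← pow_add]; congr 1; omega
  set v := (10:ℕ) ^ ℓ' * 10 ^ (m' + 1) with hv
  -- bounds : d1 * v ≤ N < (d1 + 1) * v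
  have hNval : N = d1 * v + d1 * (qc * 10 ^ (m' + 1)) + d2 * qb := by
    rw [heq, hv]
    have e : qa = 10 ^ ℓ' + qc := by omega
    rw [e]; ring
  have hub1 : d1 * (qc * 10 ^ (m' + 1)) ≤ 9 * (qc * 10 ^ (m' + 1)) :=
    Nat.mul_le_mul_right _ hd1'
  have hub2 : d2 * qb ≤ 9 * qb := Nat.mul_le_mul_right _ hd2
  have hveq : v = 9 * (qc * 10 ^ (m' + 1)) + 10 ^ (m' + 1) := by
    rw [hv, hqc]; ring
  have hlb : d1 * v ≤ N := by rw [hNval]; omega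
  have hub : N < (d1 + 1) * v := by
    have e : (d1 + 1) * v = d1 * v + v := by ring
    omega
  have hvpos : 0 < v := by positivity
  have hNpos : N ≠ 0 := by
    have hle : 1 * v ≤ d1 * v := Nat.mul_le_mul_right _ hd1
    omega
  -- leading digit is d1
  have hdiv : N / v = d1 := Nat.div_eq_of_lt_le hlb hub
  have hlog : Nat.log 10 N = ℓ' + 1 + (m' + 1) - 1 := by
    apply Nat.log_eq_of_pow_le_of_lt_pow
    · rw [hpowv]
      calc v = 1 * v := (one_mul v).symm
        _ ≤ d1 * v := Nat.mul_le_mul_right _ hd1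
        _ ≤ N := hlb
    · have h10 : (10:ℕ) ^ (ℓ' + 1 + (m' + 1) - 1 + 1) = 10 * v := by
        rw [← hpowv, ← pow_succ']
      rw [h10]
      have hle : (d1 + 1) * v ≤ 10 * v := Nat.mul_le_mul_right _ (by omega)
      omega
  have hlead : (Nat.digits 10 N).getLast (Nat.digits_ne_nil_iff_ne_zero.mpr hNpos) = d1 := by
    rw [PerrinAux.digits_getLast_eq N hNpos, hlog, hpowv, hdiv]
  -- last digit (head of digit list) is d2
  have hmod : N % 10 = d2 := by
    have e : N = 10 * (d1 * qa * 10 ^ m' + d2 * qd) + d2 := by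
      rw [heq, hB, hqb']; ring
    omega
  have hhead : Nat.digits 10 N = d2 :: Nat.digits 10 (N / 10) := by
    rw [Nat.digits_def' (by norm_num : (1:ℕ) < 10) (Nat.pos_of_ne_zero hNpos), hmod]
  -- palindrome forces d1 = d2
  have hd12 : d1 = d2 := by
    have h1 : (Nat.digits 10 N).head? = some d2 := by rw [hhead]; rfl
    have h2 : (Nat.digits 10 N).getLast? = some d1 := by
      have := List.getLast?_eq_getLast (l := Nat.digits 10 N)
        (Nat.digits_ne_nil_iff_ne_zero.mpr hNpos)
      rw [hlead] at this
      exact this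
    have h3 : (Nat.digits 10 N).getLast? = (Nat.digits 10 N).head? := by
      rw [← List.head?_reverse, hpal]
    rw [h3, h1] at h2
    exact (Option.some.injEq _ _ ▸ h2).symm
  -- N = d1 * rep (ℓ + m)
  set K := ℓ' + 1 + (m' + 1) with hK
  have hpowK : (10:ℕ) ^ K = 9 * (qa * 10 ^ (m' + 1) + qb) + 1 := by
    rw [hK, pow_add, hqa, hqb]; ring
  have hNrep : N = d1 * (qa * 10 ^ (m' + 1) + qb) := by
    rw [heq, ← hd12]; ring
  have hkey : 9 * N + d1 = d1 * 10 ^ K := by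
    rw [hNrep, hpowK]; ring
  rcases lt_or_ge K 3 with hK3 | hK3
  · -- K = 2 : N = 11 * d1 ≤ 99, so n ≤ 16 and a table lookup finishes
    have hK2 : K = 2 := by omega
    have hR11 : qa * 10 ^ (m' + 1) + qb = 11 := by
      have e := hpowK
      rw [hK2] at e
      norm_num at e
      omega
    have hN11 : N = d1 * 11 := by rw [hNrep, hR11]
    have hNle : N ≤ 99 := by omega
    have hn17 : n < 17 := by
      by_contra hc
      have hbig := PerrinAux.perrin_big (n - 17)
      have e : n - 17 + 17 = n := by omega
      rw [e, ← hN] at hbig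
      omega
    obtain ⟨p0, p1, p2, p3, p4, p5, p6, p7, p8, p9, p10, p11, p12, p13, p14, p15, p16⟩ :=
      PerrinAux.perrin_table
    rw [hN] at hN11 ⊢
    interval_cases n <;> omega
  · -- K ≥ 3 : modular contradiction
    exfalso
    exact PerrinAux.no_big_repdigit n d1 K hd1 hd1' hK3 (by rw [← hN]; exact hkey)
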